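/- Let d = (d_1,...,d_h) with 1 ≤ d_1 ≤ ... ≤ d_h, σ = Σ_{i=1}^h (d_i-1), and for 2 ≤ m ≤ σ define φ_m = HF(S̄/(x^d); m) - HF(S̄/L(d;m-1); m) in S̄ = k[x_1,...,x_h], where L(d;m-1) = (x^d) + (U_{m-1}) and U_{m-1} is the lex-largest degree-(m-1) monomial not in (x^d). Then φ_m > 0 for all 2 ≤ m ≤ σ; equivalently, the degree-m component of the ideal (U_{m-1}) is not entirely contained in (x^d). -/

import Mathlib

open MvPolynomial Finsupp

variable {k : Type} [Field k]

/-- Hilbert function of `S/I` in degree `m`, where `S = k[x_1,...,x_n]`. -/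
noncomputable def HF {n : ℕ} (I : Ideal (MvPolynomial (Fin n) k)) (m : ℕ) : ℕ :=
  Module.finrank k
    ((homogeneousSubmodule (Fin n) k m).map (Ideal.Quotient.mkₐ k I).toLinearMap)

/-- The ideal `(x_1^{d_1},...,x_h^{d_h})` inside `k[x_1,...,x_n]`. -/
noncomputable def pows {n h : ℕ} (hh : h ≤ n) (d : Fin h → ℕ) :
    Ideal (MvPolynomial (Fin n) k) :=
  Ideal.span (Set.range fun i : Fin h => (X (Fin.castLE hh i) : MvPolynomial (Fin n) k) ^ d i)

/-- `u` is the exponent vector of the lexicographically largest monomial of degree `D`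
not belonging to the ideal `I` (convention `x_1 > x_2 > ... > x_n`). -/
def IsLexLargestNonmember {n : ℕ} (I : Ideal (MvPolynomial (Fin n) k)) (D : ℕ)
    (u : Fin n →₀ ℕ) : Prop :=
  (∑ i, u i) = D ∧ (monomial u (1 : k)) ∉ I ∧
    ∀ v : Fin n →₀ ℕ, (∑ i, v i) = D → (monomial v (1 : k)) ∉ I → toLex v ≤ toLex u

/-- Hilbert–Samuel (cumulative Hilbert) function of `S/I`. -/
noncomputable def cumHF {n : ℕ} (I : Ideal (MvPolynomial (Fin n) k)) (m : ℕ) : ℤ :=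
  ∑ j ∈ Finset.range (m + 1), (HF I j : ℤ)

/-- Forward difference operator. -/
def diffOp (f : ℕ → ℤ) : ℕ → ℤ := fun m => f (m + 1) - f m

/-- The multiplicity `e(S/I)`, where `t = dim S/I`: the eventual (constant) value of the
`t`-th finite difference of the Hilbert–Samuel function of `S/I`. -/
noncomputable def mult {n : ℕ} (I : Ideal (MvPolynomial (Fin n) k)) (t : ℕ) : ℤ :=
  Filter.limsup (diffOp^[t] (cumHF I)) Filter.atTop

/-- The height of an ideal: the infimum of heights of primes containing it. -/
noncomputable def idealHeight {n : ℕ} (I : Ideal (MvPolynomial (Fin n) k)) : ℕ∞ :=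
  ⨅ (P : PrimeSpectrum (MvPolynomial (Fin n) k)) (_ : I ≤ P.asIdeal), Order.height P

/-- A homogeneous ideal. -/
def IsHomogeneousIdeal {n : ℕ} (I : Ideal (MvPolynomial (Fin n) k)) : Prop :=
  ∀ f ∈ I, ∀ m : ℕ, homogeneousComponent m f ∈ I

/-- Hilbert function of the graded submodule `a/f` of `S/f` in degree `m`. -/
noncomputable def HFsub {n : ℕ} (f a : Ideal (MvPolynomial (Fin n) k)) (m : ℕ) : ℕ :=
  Module.finrank k
    ((Submodule.map (Ideal.Quotient.mkₐ k f).toLinearMap (homogeneousSubmodule (Fin n) k m)) ⊓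
      (Submodule.map (Ideal.Quotient.mkₐ k f).toLinearMap (Submodule.restrictScalars k a)) :
      Submodule k (MvPolynomial (Fin n) k ⧸ f))

lemma aux_mem_pows_iff {h : ℕ} (d : Fin h → ℕ) (v : Fin h →₀ ℕ) :
    (monomial v (1:k)) ∈ pows (k := k) le_rfl d ↔ ∃ i, d i ≤ v i := by
  classical
  have efun : (fun i : Fin h => (X (Fin.castLE le_rfl i) : MvPolynomial (Fin h) k) ^ d i)
      = (fun s => monomial s (1:k)) ∘ fun i : Fin h => Finsupp.single i (d i) := by
    funext i
    have : Fin.castLE le_rfl i = i := by ext; rfl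
    simp [this, X_pow_eq_monomial]
  have e : pows (k := k) (le_refl h) d
      = Ideal.span ((fun s => monomial s (1:k)) ''
          (Set.range fun i : Fin h => Finsupp.single i (d i))) := by
    unfold pows
    rw [efun, Set.range_comp]
  rw [e, mem_ideal_span_monomial_image]
  have hsupp : (monomial v (1:k)).support = {v} := by
    rw [support_monomial, if_neg one_ne_zero]
  rw [hsupp]
  constructor
  · intro H
    obtain ⟨si, ⟨i, rfl⟩, hle⟩ := H v (Finset.mem_singleton_self v)
    exact ⟨i, (Finsupp.single_le_iff).mp hle⟩
  · rintro ⟨i, hi⟩ xi hxi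
    rw [Finset.mem_singleton] at hxi
    subst hxi
    exact ⟨Finsupp.single i (d i), ⟨i, rfl⟩, Finsupp.single_le_iff.mpr hi⟩

lemma aux_fd_homog {h m : ℕ} : FiniteDimensional k (homogeneousSubmodule (Fin h) k m) := by
  have e := homogeneousSubmodule_eq_finsupp_supported k (σ := Fin h) m
  have hfin : {d : (Fin h) →₀ ℕ | d.degree = m}.Finite :=
    (Finsupp.finite_of_degree_le m).subset fun f hf => le_of_eq hf
  haveI := hfin.fintype
  have : FiniteDimensional k (AddMonoidAlgebra.supported k k {d : (Fin h) →₀ ℕ | d.degree = m}) :=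
    (AddMonoidAlgebra.supportedEquivFinsupp _).symm.finiteDimensional
  exact e ▸ this

lemma aux_degree_eq_sum {h : ℕ} (f : Fin h →₀ ℕ) : f.degree = ∑ i, f i :=
  Finset.sum_subset (Finset.subset_univ _)
    (fun i _ hi => Finsupp.notMem_support_iff.mp hi)

set_option synthInstance.maxHeartbeats 1000000 in
set_option maxHeartbeats 2000000 in
theorem stmt11 {k : Type} [Field k] {h : ℕ} (d : Fin h → ℕ) (hd1 : ∀ i, 1 ≤ d i)
    (hmono : Monotone d) (m : ℕ) (hm2 : 2 ≤ m) (hmσ : m ≤ ∑ i, (d i - 1))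
    (u : Fin h →₀ ℕ)
    (hu : IsLexLargestNonmember (pows (k := k) le_rfl d) (m - 1) u) :
    HF (pows (k := k) le_rfl d ⊔ Ideal.span {monomial u (1 : k)}) m <
      HF (pows (k := k) le_rfl d) m := by
  classical
  obtain ⟨hsum, hnot, -⟩ := hu
  set I := pows (k := k) le_rfl d with hI
  set J := I ⊔ Ideal.span {monomial u (1 : k)} with hJ
  have hIJ : I ≤ J := le_sup_left
  have hui : ∀ i, u i < d i := by
    intro i
    by_contra hle
    push_neg at hle
    exact hnot ((aux_mem_pows_iff d u).mpr ⟨i, hle⟩)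
  have hlt : ∑ i, u i < ∑ i, (d i - 1) := by rw [hsum]; omega
  obtain ⟨j, -, hj⟩ := Finset.exists_lt_of_sum_lt hlt
  set v : Fin h →₀ ℕ := u + Finsupp.single j 1 with hv
  have hvj : v j = u j + 1 := by simp [hv]
  have hvi : ∀ i, i ≠ j → v i = u i := by
    intro i hij
    simp [hv, Finsupp.single_apply, Ne.symm hij]
  have hvI : monomial v (1:k) ∉ I := by
    rw [hI, aux_mem_pows_iff]
    rintro ⟨i, hi⟩
    by_cases hij : i = j
    · subst hij; rw [hvj] at hi; omega
    · rw [hvi i hij] at hi; exact absurd hi (not_le.mpr (hui i))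
  have hvdeg : (monomial v (1:k)) ∈ homogeneousSubmodule (Fin h) k m := by
    rw [mem_homogeneousSubmodule]
    apply isHomogeneous_monomial
    rw [aux_degree_eq_sum]
    have : ∑ i, v i = (∑ i, u i) + ∑ i, Finsupp.single j 1 i := by
      rw [← Finset.sum_add_distrib]
      exact Finset.sum_congr rfl fun i _ => rfl
    rw [this, hsum, Finset.sum_eq_single j (fun i _ hij => Finsupp.single_eq_of_ne hij)
      (fun hju => absurd (Finset.mem_univ j) hju)]
    rw [Finsupp.single_eq_same]
    omega
  have hvJ : monomial v (1:k) ∈ J := by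
    apply Ideal.mem_sup_right
    rw [Ideal.mem_span_singleton]
    exact ⟨monomial (Finsupp.single j 1) 1, by rw [monomial_mul, one_mul]⟩
  -- linear algebra
  haveI : FiniteDimensional k (homogeneousSubmodule (Fin h) k m) := aux_fd_homog
  set S := MvPolynomial (Fin h) k
  set H := homogeneousSubmodule (Fin h) k m with hH
  set mkI := (Ideal.Quotient.mkₐ k I).toLinearMap with hmkI
  set mkJ := (Ideal.Quotient.mkₐ k J).toLinearMap with hmkJ
  set F := (Ideal.quotientMapₐ J (AlgHom.id k S) (by simpa using hIJ)).toLinearMap with hF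
  have hcomp : F ∘ₗ mkI = mkJ := by
    apply LinearMap.ext
    intro x
    simp [hF, hmkI, hmkJ]
  set M := H.map mkI with hM
  haveI : FiniteDimensional k M := Module.Finite.map H mkI
  set g := F.domRestrict M with hg
  have hrange : LinearMap.range g = H.map mkJ := by
    rw [hg, LinearMap.range_domRestrict, hM, ← Submodule.map_comp, hcomp]
  have hkerpos : 0 < Module.finrank k (LinearMap.ker g) := by
    have hx : mkI (monomial v (1:k)) ∈ M := Submodule.mem_map_of_mem hvdeg
    have hker : LinearMap.ker g ≠ ⊥ := by
      intro hbot
      have hgx : g ⟨mkI (monomial v (1:k)), hx⟩ = 0 := by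
        show F (mkI (monomial v (1:k))) = 0
        rw [← LinearMap.comp_apply, hcomp]
        show Ideal.Quotient.mkₐ k J (monomial v (1:k)) = 0
        rw [Ideal.Quotient.mkₐ_eq_mk, Ideal.Quotient.eq_zero_iff_mem]
        exact hvJ
      have hx0 : (⟨mkI (monomial v (1:k)), hx⟩ : M) = 0 := by
        rwa [← LinearMap.mem_ker, hbot, Submodule.mem_bot] at hgx
      have : mkI (monomial v (1:k)) = 0 := congrArg Subtype.val hx0
      apply hvI
      rw [← Ideal.Quotient.eq_zero_iff_mem]
      exact this
    have : Nontrivial (LinearMap.ker g) := Submodule.nontrivial_iff_ne_bot.mpr hker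
    exact Module.finrank_pos (R := k) (M := LinearMap.ker g)
  have hrn := LinearMap.finrank_range_add_finrank_ker g
  rw [hrange] at hrn
  show Module.finrank k (H.map mkJ) < Module.finrank k M
  rw [← hrn]
  exact Nat.lt_add_of_pos_right hkerpos
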